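/- Let β ∈ [0,∞), γ ∈ (0,1], f ∈ H, and let (x_i)_{i≥1} be a weak β-greedy sequence for f with parameter γ. Then for every n ≥ 1: (∏_{i=n+1}^{2n} ‖r_i‖_∞)^{1/n} ≤ γ^{−1} · n^{−min(β,1)/2} · ‖r_{n+1}‖_H · (∏_{i=n+1}^{2n} P_{X_i}(x_{i+1})^{1/max(β,1)})^{1/n}. -/

import Mathlib

open scoped RealInnerProductSpace

variable {H : Type*} [NormedAddCommGroup H] [InnerProductSpace ℝ H] {Ω : Type*}

/-- The kernel interpolant `I_X f`: the orthogonal projection of `f` onto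
`V(X) = span {Φ(x) : x ∈ X}`. -/
noncomputable def interp (Φ : Ω → H) (X : Finset Ω) (f : H) : H :=
  haveI : FiniteDimensional ℝ (Submodule.span ℝ (Φ '' (X : Set Ω))) :=
    FiniteDimensional.span_of_finite ℝ (X.finite_toSet.image Φ)
  (Submodule.orthogonalProjectionOnto (Submodule.span ℝ (Φ '' (X : Set Ω))) f : H)

/-- The power function `P_X(z) = ‖Φ(z) − Π_{V(X)} Φ(z)‖`. -/
noncomputable def powerFun (Φ : Ω → H) (X : Finset Ω) (z : Ω) : ℝ :=
  ‖Φ z - interp Φ X (Φ z)‖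

/-- The sup norm `‖g‖_∞ = sup_{x ∈ Ω} |g(x)|`, where `g(x) = ⟪g, Φ(x)⟫`. -/
noncomputable def supNorm (Φ : Ω → H) (g : H) : ℝ := ⨆ x : Ω, |⟪g, Φ x⟫|

/-- `X_i = {x_1, …, x_i}` (so `X_0 = ∅`). -/
noncomputable def Xset (x : ℕ → Ω) (i : ℕ) : Finset Ω := by
  classical exact (Finset.Icc 1 i).image x

/-- `(x_i)_{i ≥ 1}` is a weak β-greedy sequence for `f` with parameter `γ`:
for every `i ≥ 0` and `z ∈ Ω`,
`γ · |r_i(z)|^β · P_{X_i}(z)^{1−β} ≤ |r_i(x_{i+1})|^β · P_{X_i}(x_{i+1})^{1−β}`,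
where `r_i = f − I_{X_i} f`. -/
def IsWeakGreedy (Φ : Ω → H) (f : H) (β γ : ℝ) (x : ℕ → Ω) : Prop :=
  ∀ (i : ℕ) (z : Ω),
    γ * |⟪f - interp Φ (Xset x i) f, Φ z⟫| ^ β * powerFun Φ (Xset x i) z ^ (1 - β)
      ≤ |⟪f - interp Φ (Xset x i) f, Φ (x (i + 1))⟫| ^ β
          * powerFun Φ (Xset x i) (x (i + 1)) ^ (1 - β)

lemma interp_mem (Φ : Ω → H) (X : Finset Ω) (f : H) :
    interp Φ X f ∈ Submodule.span ℝ (Φ '' (X : Set Ω)) := by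
  haveI : FiniteDimensional ℝ (Submodule.span ℝ (Φ '' (X : Set Ω))) :=
    FiniteDimensional.span_of_finite ℝ (X.finite_toSet.image Φ)
  exact (Submodule.orthogonalProjectionOnto (Submodule.span ℝ (Φ '' (X : Set Ω))) f).2

lemma interp_min (Φ : Ω → H) (X : Finset Ω) (f v : H)
    (hv : v ∈ Submodule.span ℝ (Φ '' (X : Set Ω))) :
    ‖f - interp Φ X f‖ ≤ ‖f - v‖ := by
  haveI : FiniteDimensional ℝ (Submodule.span ℝ (Φ '' (X : Set Ω))) :=
    FiniteDimensional.span_of_finite ℝ (X.finite_toSet.image Φ)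
  rw [show interp Φ X f = (Submodule.starProjection (Submodule.span ℝ (Φ '' (X : Set Ω))) f) from rfl,
    Submodule.starProjection_minimal]
  refine ciInf_le ⟨0, ?_⟩ (⟨v, hv⟩ : Submodule.span ℝ (Φ '' (X : Set Ω)))
  rintro b ⟨w, rfl⟩; positivity

lemma interp_orth (Φ : Ω → H) (X : Finset Ω) (f v : H)
    (hv : v ∈ Submodule.span ℝ (Φ '' (X : Set Ω))) :
    ⟪f - interp Φ X f, v⟫ = 0 := by
  haveI : FiniteDimensional ℝ (Submodule.span ℝ (Φ '' (X : Set Ω))) :=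
    FiniteDimensional.span_of_finite ℝ (X.finite_toSet.image Φ)
  have h := Submodule.sub_starProjection_mem_orthogonal (K := Submodule.span ℝ (Φ '' (X : Set Ω))) f
  exact (Submodule.mem_orthogonal' _ _).1 h v hv

lemma resid_CS (Φ : Ω → H) (X : Finset Ω) (f : H) (z : Ω) :
    |⟪f - interp Φ X f, Φ z⟫| ≤ ‖f - interp Φ X f‖ * powerFun Φ X z := by
  have h1 : ⟪f - interp Φ X f, Φ z⟫ = ⟪f - interp Φ X f, Φ z - interp Φ X (Φ z)⟫ := by
    rw [inner_sub_right, interp_orth Φ X f _ (interp_mem Φ X (Φ z)), sub_zero]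
  rw [h1, powerFun]
  exact abs_real_inner_le_norm _ _

lemma powerFun_le_one (Φ : Ω → H) (hΦ : ∀ z : Ω, ‖Φ z‖ ≤ 1) (X : Finset Ω) (z : Ω) :
    powerFun Φ X z ≤ 1 := by
  have := interp_min Φ X (Φ z) 0 (Submodule.zero_mem _)
  rw [powerFun]
  calc ‖Φ z - interp Φ X (Φ z)‖ ≤ ‖Φ z - 0‖ := this
  _ = ‖Φ z‖ := by rw [sub_zero]
  _ ≤ 1 := hΦ z

lemma resid_mono (Φ : Ω → H) {X Y : Finset Ω} (hXY : X ⊆ Y) (f : H) :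
    ‖f - interp Φ Y f‖ ≤ ‖f - interp Φ X f‖ := by
  refine interp_min Φ Y f _ (Submodule.span_mono ?_ (interp_mem Φ X f))
  exact Set.image_mono hXY

lemma energy (Φ : Ω → H) {X Y : Finset Ω} (hXY : X ⊆ Y) (f : H) {w : Ω} (hw : w ∈ Y) :
    ‖f - interp Φ Y f‖ ^ 2 + (|⟪f - interp Φ X f, Φ w⟫| / powerFun Φ X w) ^ 2
      ≤ ‖f - interp Φ X f‖ ^ 2 := by
  set r := f - interp Φ X f with hr
  set p := powerFun Φ X w with hp
  have hp0 : 0 ≤ p := norm_nonneg _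
  have hCS : |⟪r, Φ w⟫| ≤ ‖r‖ * p := resid_CS Φ X f w
  rcases eq_or_lt_of_le hp0 with hpz | hppos
  · -- p = 0
    have ha : |⟪r, Φ w⟫| = 0 := le_antisymm (by simpa [← hpz] using hCS) (abs_nonneg _)
    have := resid_mono Φ hXY f
    have h2 : ‖f - interp Φ Y f‖ ^ 2 ≤ ‖r‖ ^ 2 := by
      exact pow_le_pow_left₀ (norm_nonneg _) this 2
    simp [ha, ← hpz]
    simpa using h2
  · set q := Φ w - interp Φ X (Φ w) with hq
    have hqY : q ∈ Submodule.span ℝ (Φ '' (Y : Set Ω)) := by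
      refine Submodule.sub_mem _ ?_ ?_
      · exact Submodule.subset_span ⟨w, hw, rfl⟩
      · exact Submodule.span_mono (Set.image_mono hXY) (interp_mem Φ X (Φ w))
    have hnq : ‖q‖ = p := rfl
    set t : ℝ := ⟪r, q⟫ / p ^ 2 with ht
    have hvY : interp Φ X f + t • q ∈ Submodule.span ℝ (Φ '' (Y : Set Ω)) := by
      refine Submodule.add_mem _ ?_ (Submodule.smul_mem _ _ hqY)
      exact Submodule.span_mono (Set.image_mono hXY) (interp_mem Φ X f)
    have key : ‖f - interp Φ Y f‖ ≤ ‖r - t • q‖ := by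
      have := interp_min Φ Y f _ hvY
      simpa [hr, sub_sub] using this
    have hrq : ⟪r, Φ w⟫ = ⟪r, q⟫ := by
      rw [hq, inner_sub_right, interp_orth Φ X f _ (interp_mem Φ X (Φ w)), sub_zero]
    have hexp : ‖r - t • q‖ ^ 2 = ‖r‖ ^ 2 - (⟪r, q⟫ / p) ^ 2 := by
      have h1 : ‖r - t • q‖ ^ 2 = ‖r‖ ^ 2 - 2 * (t * ⟪r, q⟫) + t ^ 2 * p ^ 2 := by
        rw [← real_inner_self_eq_norm_sq, inner_sub_sub_self]
        rw [real_inner_smul_right, real_inner_smul_left, real_inner_smul_right,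
          real_inner_smul_left, real_inner_comm q r,
          show (⟪q, q⟫ : ℝ) = p ^ 2 by rw [real_inner_self_eq_norm_sq, hnq],
          show (⟪r, r⟫ : ℝ) = ‖r‖ ^ 2 from real_inner_self_eq_norm_sq r]
        ring
      rw [h1, ht]
      field_simp
      ring
    have h2 : ‖f - interp Φ Y f‖ ^ 2 ≤ ‖r‖ ^ 2 - (⟪r, q⟫ / p) ^ 2 := by
      rw [← hexp]; exact pow_le_pow_left₀ (norm_nonneg _) key 2
    have h3 : (|⟪r, Φ w⟫| / p) ^ 2 = (⟪r, q⟫ / p) ^ 2 := by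
      rw [hrq, div_pow, div_pow, sq_abs]
    linarith

lemma sum_le_of_tele (g R : ℕ → ℝ) (h : ∀ i, g i ≤ R i - R (i+1)) {m M : ℕ} (hm : m ≤ M) :
    ∑ i ∈ Finset.Ico m M, g i ≤ R m - R M := by
  induction M, hm using Nat.le_induction with
  | base => simp
  | succ M hm ih =>
    rw [Finset.sum_Ico_succ_top hm]
    linarith [h M]

lemma amgm {s : Finset ℕ} {c : ℕ → ℝ} (hc : ∀ i ∈ s, 0 ≤ c i) {n : ℕ} (hn : 0 < n)
    (hcard : s.card = n) {B : ℝ} (hB : ∑ i ∈ s, (c i)^2 ≤ B) :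
    ∏ i ∈ s, c i ≤ (B / n) ^ ((n : ℝ)/2) := by
  have hn0 : (0:ℝ) < (n:ℝ) := by exact_mod_cast hn
  have hB0 : (0:ℝ) ≤ B := le_trans (Finset.sum_nonneg fun i _ => sq_nonneg _) hB
  have hw' : ∑ _i ∈ s, (1/(n:ℝ)) = 1 := by
    rw [Finset.sum_const, hcard, nsmul_eq_mul]; field_simp
  have key := Real.geom_mean_le_arith_mean_weighted s (fun _ => 1/(n:ℝ))
    (fun i => (c i)^2) (fun i _ => by positivity) hw' (fun i _ => sq_nonneg _)
  have hL : ∏ i ∈ s, ((c i)^2) ^ (1/(n:ℝ)) = (∏ i ∈ s, c i) ^ ((2:ℝ)/n) := by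
    rw [← Real.finset_prod_rpow s c hc ((2:ℝ)/n)]
    refine Finset.prod_congr rfl fun i hi => ?_
    rw [← Real.rpow_natCast (c i) 2, ← Real.rpow_mul (hc i hi)]
    norm_num [div_eq_mul_inv]
  have hR : ∑ i ∈ s, (1/(n:ℝ)) * (c i)^2 ≤ B / n := by
    rw [← Finset.mul_sum]
    calc 1/(n:ℝ) * ∑ i ∈ s, (c i)^2 ≤ 1/(n:ℝ) * B :=
          mul_le_mul_of_nonneg_left hB (by positivity)
    _ = B / n := by ring
  have h2 : (∏ i ∈ s, c i) ^ ((2:ℝ)/n) ≤ B / n := by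
    calc (∏ i ∈ s, c i) ^ ((2:ℝ)/n) = ∏ i ∈ s, ((c i)^2) ^ (1/(n:ℝ)) := hL.symm
    _ ≤ _ := key
    _ ≤ B / n := hR
  have hprod0 : 0 ≤ ∏ i ∈ s, c i := Finset.prod_nonneg hc
  calc ∏ i ∈ s, c i = ((∏ i ∈ s, c i) ^ ((2:ℝ)/n)) ^ ((n:ℝ)/2) := by
        rw [← Real.rpow_mul hprod0]
        rw [show (2:ℝ)/n * (n/2) = 1 by field_simp]
        exact (Real.rpow_one _).symm
  _ ≤ (B / n) ^ ((n:ℝ)/2) := Real.rpow_le_rpow (by positivity) h2 (by positivity)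

lemma mem_Xset {x : ℕ → Ω} {i : ℕ} {w : Ω} : w ∈ Xset x i ↔ ∃ j, 1 ≤ j ∧ j ≤ i ∧ x j = w := by
  classical
  unfold Xset
  simp [Finset.mem_image, Finset.mem_Icc, and_assoc]

lemma Xset_mono (x : ℕ → Ω) {i j : ℕ} (h : i ≤ j) : Xset x i ⊆ Xset x j := by
  intro w hw
  rw [mem_Xset] at hw ⊢
  obtain ⟨k, h1, h2, h3⟩ := hw
  exact ⟨k, h1, h2.trans h, h3⟩

lemma self_mem_Xset (x : ℕ → Ω) (i : ℕ) : x (i+1) ∈ Xset x (i+1) :=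
  mem_Xset.2 ⟨i+1, by omega, le_rfl, rfl⟩

lemma step_bound (Φ : Ω → H) (hΦ : ∀ z : Ω, ‖Φ z‖ ≤ 1)
    (β γ : ℝ) (hβ : 0 ≤ β) (hγ0 : 0 < γ) (hγ1 : γ ≤ 1)
    (f : H) (x : ℕ → Ω) (hx : IsWeakGreedy Φ f β γ x) (i : ℕ) (N : ℝ)
    (hN : ‖f - interp Φ (Xset x i) f‖ ≤ N) (z : Ω) :
    |⟪f - interp Φ (Xset x i) f, Φ z⟫| ≤
      γ⁻¹ * N ^ (1 - min β 1) *
        (|⟪f - interp Φ (Xset x i) f, Φ (x (i+1))⟫| / powerFun Φ (Xset x i) (x (i+1)))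
          ^ (min β 1)
        * powerFun Φ (Xset x i) (x (i+1)) ^ (1 / max β 1) := by
  set r := f - interp Φ (Xset x i) f with hr
  set t := |⟪r, Φ z⟫| with htdef
  set a := |⟪r, Φ (x (i+1))⟫| with hadef
  set p := powerFun Φ (Xset x i) (x (i+1)) with hpdef
  set P := powerFun Φ (Xset x i) z with hPdef
  have greedy : γ * t ^ β * P ^ (1 - β) ≤ a ^ β * p ^ (1 - β) := hx i z
  have ht0 : 0 ≤ t := abs_nonneg _
  have ha0 : 0 ≤ a := abs_nonneg _
  have hp0 : 0 ≤ p := norm_nonneg _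
  have hP0 : 0 ≤ P := norm_nonneg _
  have hN0 : 0 ≤ N := le_trans (norm_nonneg _) hN
  have hta : t ≤ ‖r‖ * P := resid_CS Φ (Xset x i) f z
  have hap : a ≤ ‖r‖ * p := resid_CS Φ (Xset x i) f (x (i+1))
  have hP1 : P ≤ 1 := powerFun_le_one Φ hΦ _ z
  have hRHS0 : 0 ≤ γ⁻¹ * N ^ (1 - min β 1) * (a / p) ^ (min β 1) * p ^ (1 / max β 1) := by
    have := Real.rpow_nonneg (div_nonneg ha0 hp0) (min β 1)
    have := Real.rpow_nonneg hp0 (1 / max β 1)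
    have := Real.rpow_nonneg hN0 (1 - min β 1)
    positivity
  rcases eq_or_lt_of_le ht0 with htz | htpos
  · rw [← htz]; exact hRHS0
  have hPpos : 0 < P := by
    rcases eq_or_lt_of_le hP0 with h | h
    · exfalso; rw [← h, mul_zero] at hta; exact absurd (le_antisymm hta ht0) (ne_of_gt htpos)
    · exact h
  have hRpos : 0 < ‖r‖ := by
    by_contra h
    push_neg at h
    have : ‖r‖ = 0 := le_antisymm h (norm_nonneg _)
    rw [this, zero_mul] at hta
    exact absurd (le_antisymm hta ht0) (ne_of_gt htpos)
  rcases eq_or_lt_of_le hp0 with hpz | hppos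
  · -- p = 0 : contradiction with greedy
    exfalso
    have haz : a = 0 := by
      have : a ≤ ‖r‖ * 0 := by rw [← hpz] at hap; exact hap
      simpa using le_antisymm (by simpa using this) ha0
    have hRHSz : a ^ β * p ^ (1 - β) = 0 := by
      rcases eq_or_ne β 0 with hb | hb
      · rw [hb, ← hpz]
        norm_num
      · rw [haz, Real.zero_rpow hb, zero_mul]
    have hLHSpos : 0 < γ * t ^ β * P ^ (1 - β) := by
      have h1 : 0 < t ^ β := Real.rpow_pos_of_pos htpos β
      have h2 : 0 < P ^ (1 - β) := Real.rpow_pos_of_pos hPpos (1 - β)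
      positivity
    rw [hRHSz] at greedy
    exact absurd greedy (not_le.2 hLHSpos)
  -- p > 0
  rcases le_total β 1 with hβ1 | hβ1
  · -- β ≤ 1
    rw [min_eq_left hβ1, max_eq_right hβ1]
    have h1M : (1:ℝ) / 1 = 1 := by norm_num
    rw [h1M, Real.rpow_one]
    -- t ≤ t^β * ‖r‖^{1-β} * P^{1-β}
    have hsplit : t = t ^ β * t ^ (1 - β) := by
      rw [← Real.rpow_add htpos]
      norm_num
    have h2 : t ^ (1 - β) ≤ ‖r‖ ^ (1 - β) * P ^ (1 - β) := by
      rw [← Real.mul_rpow (le_of_lt hRpos) hP0]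
      exact Real.rpow_le_rpow ht0 hta (by linarith)
    have h3 : t ≤ t ^ β * (‖r‖ ^ (1 - β) * P ^ (1 - β)) := by
      calc t = t ^ β * t ^ (1 - β) := hsplit
      _ ≤ t ^ β * (‖r‖ ^ (1 - β) * P ^ (1 - β)) :=
        mul_le_mul_of_nonneg_left h2 (Real.rpow_nonneg ht0 β)
    have h4 : t ^ β * P ^ (1 - β) ≤ γ⁻¹ * (a ^ β * p ^ (1 - β)) := by
      rw [← sub_nonneg]
      have hg := sub_nonneg.2 greedy
      have key : γ⁻¹ * (a ^ β * p ^ (1 - β) - γ * t ^ β * P ^ (1 - β))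
          = γ⁻¹ * (a ^ β * p ^ (1 - β)) - t ^ β * P ^ (1 - β) := by
        field_simp
      rw [← key]
      exact mul_nonneg (inv_nonneg.2 hγ0.le) hg
    have hconv : a ^ β * p ^ (1 - β) = (a / p) ^ β * p := by
      rw [Real.div_rpow ha0 hp0, Real.rpow_sub hppos, Real.rpow_one]
      field_simp
    have h5 : ‖r‖ ^ (1 - β) ≤ N ^ (1 - β) :=
      Real.rpow_le_rpow (norm_nonneg _) hN (by linarith)
    calc t ≤ t ^ β * (‖r‖ ^ (1 - β) * P ^ (1 - β)) := h3
    _ = ‖r‖ ^ (1 - β) * (t ^ β * P ^ (1 - β)) := by ring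
    _ ≤ ‖r‖ ^ (1 - β) * (γ⁻¹ * (a ^ β * p ^ (1 - β))) :=
        mul_le_mul_of_nonneg_left h4 (Real.rpow_nonneg (norm_nonneg _) _)
    _ ≤ N ^ (1 - β) * (γ⁻¹ * (a ^ β * p ^ (1 - β))) := by
        refine mul_le_mul_of_nonneg_right h5 ?_
        have := Real.rpow_nonneg ha0 β
        have := Real.rpow_nonneg hp0 (1 - β)
        positivity
    _ = γ⁻¹ * N ^ (1 - β) * (a / p) ^ β * p := by rw [hconv]; ring
  · -- 1 ≤ β
    rw [min_eq_right hβ1, max_eq_left hβ1, Real.rpow_one,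
      show (1:ℝ) - 1 = 0 by norm_num, Real.rpow_zero, mul_one]
    have hβpos : 0 < β := by linarith
    have hβne : β ≠ 0 := ne_of_gt hβpos
    have hinv0 : (0:ℝ) ≤ γ⁻¹ := inv_nonneg.2 hγ0.le
    have hinv1 : 1 ≤ γ⁻¹ := (one_le_inv₀ hγ0).2 hγ1
    set S := γ⁻¹ * (a / p) * p ^ (1 / β) with hS
    have hS0 : 0 ≤ S := by
      have := Real.rpow_nonneg hp0 (1 / β)
      positivity
    refine (Real.rpow_le_rpow_iff ht0 hS0 hβpos).1 ?_
    have hSβ : S ^ β = (γ⁻¹) ^ β * ((a / p) ^ β * p) := by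
      rw [hS, Real.mul_rpow (mul_nonneg hinv0 (div_nonneg ha0 hp0))
        (Real.rpow_nonneg hp0 _),
        Real.mul_rpow hinv0 (div_nonneg ha0 hp0),
        ← Real.rpow_mul hp0, one_div, inv_mul_cancel₀ hβne, Real.rpow_one, mul_assoc]
    have hPexp : 1 ≤ P ^ (1 - β) :=
      Real.one_le_rpow_of_pos_of_le_one_of_nonpos hPpos hP1 (by linarith)
    have h1 : γ * t ^ β ≤ a ^ β * p ^ (1 - β) := by
      calc γ * t ^ β = γ * t ^ β * 1 := (mul_one _).symm
      _ ≤ γ * t ^ β * P ^ (1 - β) := by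
          refine mul_le_mul_of_nonneg_left hPexp ?_
          have := Real.rpow_nonneg ht0 β
          positivity
      _ ≤ a ^ β * p ^ (1 - β) := greedy
    have hconv : a ^ β * p ^ (1 - β) = (a / p) ^ β * p := by
      rw [Real.div_rpow ha0 hp0, Real.rpow_sub hppos, Real.rpow_one]
      field_simp
    have h2 : t ^ β ≤ γ⁻¹ * ((a / p) ^ β * p) := by
      rw [← hconv]
      calc t ^ β = γ⁻¹ * (γ * t ^ β) := by field_simp
      _ ≤ γ⁻¹ * (a ^ β * p ^ (1 - β)) := mul_le_mul_of_nonneg_left h1 hinv0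
    calc t ^ β ≤ γ⁻¹ * ((a / p) ^ β * p) := h2
    _ ≤ (γ⁻¹) ^ β * ((a / p) ^ β * p) := by
        refine mul_le_mul_of_nonneg_right ?_ ?_
        · calc γ⁻¹ = (γ⁻¹) ^ (1:ℝ) := (Real.rpow_one _).symm
          _ ≤ (γ⁻¹) ^ β := Real.rpow_le_rpow_of_exponent_le hinv1 hβ1
        · have := Real.rpow_nonneg (div_nonneg ha0 hp0) β
          positivity
    _ = S ^ β := hSβ.symm

theorem statement_5 [Nonempty Ω]
    (Φ : Ω → H) (hΦ : ∀ z : Ω, ‖Φ z‖ ≤ 1)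
    (β γ : ℝ) (hβ : 0 ≤ β) (hγ0 : 0 < γ) (hγ1 : γ ≤ 1)
    (f : H) (x : ℕ → Ω) (hx : IsWeakGreedy Φ f β γ x)
    (n : ℕ) (hn : 1 ≤ n) :
    (∏ i ∈ Finset.Icc (n + 1) (2 * n),
        supNorm Φ (f - interp Φ (Xset x i) f)) ^ (1 / (n : ℝ))
      ≤ γ⁻¹ * (n : ℝ) ^ (-(min β 1) / 2) * ‖f - interp Φ (Xset x (n + 1)) f‖
          * (∏ i ∈ Finset.Icc (n + 1) (2 * n),
              powerFun Φ (Xset x i) (x (i + 1)) ^ (1 / max β 1)) ^ (1 / (n : ℝ)) := by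
  classical
  have hnpos : 0 < n := hn
  have hn0 : (0:ℝ) < n := by exact_mod_cast hn
  have hnne : (n:ℝ) ≠ 0 := ne_of_gt hn0
  have hm0 : 0 ≤ min β 1 := le_min hβ zero_le_one
  set s := Finset.Icc (n + 1) (2 * n) with hs
  have hcard : s.card = n := by rw [hs, Nat.card_Icc]; omega
  have hsup0 : ∀ i : ℕ, 0 ≤ supNorm Φ (f - interp Φ (Xset x i) f) :=
    fun i => Real.iSup_nonneg fun z => abs_nonneg _
  set N := ‖f - interp Φ (Xset x (n + 1)) f‖ with hNdef
  have hN0 : 0 ≤ N := norm_nonneg _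
  have hmono : ∀ i ∈ s, ‖f - interp Φ (Xset x i) f‖ ≤ N := by
    intro i hi
    rw [hs, Finset.mem_Icc] at hi
    exact resid_mono Φ (Xset_mono x hi.1) f
  set Q := ∏ i ∈ s, powerFun Φ (Xset x i) (x (i + 1)) ^ (1 / max β 1) with hQ
  have hQ0 : 0 ≤ Q :=
    Finset.prod_nonneg fun i _ => Real.rpow_nonneg (norm_nonneg _) _
  set L := ∏ i ∈ s, supNorm Φ (f - interp Φ (Xset x i) f) with hL
  have hL0 : 0 ≤ L := Finset.prod_nonneg fun i _ => hsup0 i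
  have hRHS0 : 0 ≤ γ⁻¹ * (n : ℝ) ^ (-(min β 1) / 2) * N * Q ^ (1 / (n:ℝ)) := by
    have h1 := Real.rpow_nonneg hn0.le (-(min β 1) / 2)
    have h2 := Real.rpow_nonneg hQ0 (1/(n:ℝ))
    positivity
  rcases eq_or_lt_of_le hN0 with hNz | hNpos
  · -- N = 0 : every residual is zero
    have hmem : n + 1 ∈ s := by rw [hs, Finset.mem_Icc]; omega
    have hz : supNorm Φ (f - interp Φ (Xset x (n+1)) f) = 0 := by
      have h1 : f - interp Φ (Xset x (n+1)) f = 0 := by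
        rw [← norm_le_zero_iff, ← hNdef, ← hNz]
      rw [h1]
      simp [supNorm, inner_zero_left]
    have hLz : L = 0 := Finset.prod_eq_zero hmem hz
    rw [hLz, Real.zero_rpow (one_div_ne_zero hnne)]
    exact hRHS0
  -- N > 0
  set c : ℕ → ℝ := fun i =>
    |⟪f - interp Φ (Xset x i) f, Φ (x (i+1))⟫| / powerFun Φ (Xset x i) (x (i+1)) with hc
  have hc0 : ∀ i, 0 ≤ c i := fun i => div_nonneg (abs_nonneg _) (norm_nonneg _)
  have htele : ∑ i ∈ s, (c i)^2 ≤ N^2 := by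
    have h1 := sum_le_of_tele (fun i => (c i)^2)
      (fun i => ‖f - interp Φ (Xset x i) f‖^2)
      (fun i => by
        have := energy Φ (Xset_mono x (Nat.le_succ i)) f (self_mem_Xset x i)
        simp only [hc]
        linarith)
      (show n + 1 ≤ 2*n + 1 by omega)
    have h2 : s = Finset.Ico (n+1) (2*n+1) := by rw [hs, Finset.Ico_add_one_right_eq_Icc]
    rw [h2]
    have h3 : (0:ℝ) ≤ ‖f - interp Φ (Xset x (2*n+1)) f‖^2 := sq_nonneg _
    calc ∑ i ∈ Finset.Ico (n+1) (2*n+1), (c i)^2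
        ≤ ‖f - interp Φ (Xset x (n+1)) f‖^2 - ‖f - interp Φ (Xset x (2*n+1)) f‖^2 := h1
    _ ≤ N^2 := by rw [hNdef]; linarith
  have prodC : ∏ i ∈ s, c i ≤ (N^2/(n:ℝ)) ^ ((n:ℝ)/2) :=
    amgm (fun i _ => hc0 i) hnpos hcard htele
  have step : ∀ i ∈ s, supNorm Φ (f - interp Φ (Xset x i) f)
      ≤ γ⁻¹ * N ^ (1 - min β 1) * (c i) ^ (min β 1)
        * powerFun Φ (Xset x i) (x (i + 1)) ^ (1 / max β 1) := by
    intro i hi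
    exact ciSup_le fun z => step_bound Φ hΦ β γ hβ hγ0 hγ1 f x hx i N (hmono i hi) z
  have base0 : 0 ≤ γ⁻¹ * N ^ (1 - min β 1) := by
    have := Real.rpow_nonneg hN0 (1 - min β 1)
    positivity
  have prod_le1 : L ≤ (γ⁻¹ * N ^ (1 - min β 1)) ^ n
      * ((N^2/(n:ℝ)) ^ ((n:ℝ)/2)) ^ (min β 1) * Q := by
    calc L ≤ ∏ i ∈ s, (γ⁻¹ * N ^ (1 - min β 1) * (c i) ^ (min β 1)
          * powerFun Φ (Xset x i) (x (i + 1)) ^ (1 / max β 1)) := by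
          rw [hL]
          exact Finset.prod_le_prod (fun i _ => hsup0 i) step
    _ = (γ⁻¹ * N ^ (1 - min β 1)) ^ n * (∏ i ∈ s, (c i) ^ (min β 1)) * Q := by
          rw [Finset.prod_mul_distrib, Finset.prod_mul_distrib, Finset.prod_const, hcard, hQ]
    _ ≤ (γ⁻¹ * N ^ (1 - min β 1)) ^ n * ((N^2/(n:ℝ)) ^ ((n:ℝ)/2)) ^ (min β 1) * Q := by
          refine mul_le_mul_of_nonneg_right (mul_le_mul_of_nonneg_left ?_ (pow_nonneg base0 n)) hQ0
          rw [Real.finset_prod_rpow s c (fun i _ => hc0 i) (min β 1)]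
          exact Real.rpow_le_rpow (Finset.prod_nonneg fun i _ => hc0 i) prodC hm0
  have hE : ((γ⁻¹ * N ^ (1 - min β 1)) ^ n : ℝ) ^ (1/(n:ℝ)) = γ⁻¹ * N ^ (1 - min β 1) := by
    rw [← Real.rpow_natCast (γ⁻¹ * N ^ (1 - min β 1)) n, ← Real.rpow_mul base0,
      mul_one_div, div_self hnne, Real.rpow_one]
  have hb0 : (0:ℝ) ≤ N^2/(n:ℝ) := by positivity
  have hD : (((N^2/(n:ℝ)) ^ ((n:ℝ)/2)) ^ (min β 1)) ^ (1/(n:ℝ))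
      = N ^ (min β 1) * ((n:ℝ) ^ ((min β 1)/2))⁻¹ := by
    rw [← Real.rpow_mul hb0, ← Real.rpow_mul hb0,
      show ((n:ℝ)/2 * min β 1) * (1/(n:ℝ)) = min β 1 / 2 by field_simp,
      Real.div_rpow (sq_nonneg N) hn0.le,
      ← Real.rpow_natCast N 2, ← Real.rpow_mul hN0,
      show ((2:ℕ):ℝ) * (min β 1 / 2) = min β 1 by push_cast; ring, div_eq_mul_inv]
  have hcomb : (γ⁻¹ * N ^ (1 - min β 1)) * (N ^ (min β 1) * ((n:ℝ) ^ ((min β 1)/2))⁻¹)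
      * Q ^ (1/(n:ℝ))
      = γ⁻¹ * (n : ℝ) ^ (-(min β 1) / 2) * N * Q ^ (1/(n:ℝ)) := by
    rw [show -(min β 1) / 2 = -((min β 1)/2) by ring, Real.rpow_neg hn0.le]
    have hNN : N ^ (1 - min β 1) * N ^ (min β 1) = N := by
      rw [← Real.rpow_add hNpos, show (1 - min β 1) + min β 1 = 1 by ring, Real.rpow_one]
    calc (γ⁻¹ * N ^ (1 - min β 1)) * (N ^ (min β 1) * ((n:ℝ) ^ ((min β 1)/2))⁻¹)
          * Q ^ (1/(n:ℝ))
        = γ⁻¹ * (N ^ (1 - min β 1) * N ^ (min β 1)) * ((n:ℝ) ^ ((min β 1)/2))⁻¹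
          * Q ^ (1/(n:ℝ)) := by ring
    _ = _ := by rw [hNN]; ring
  calc L ^ (1/(n:ℝ))
      ≤ ((γ⁻¹ * N ^ (1 - min β 1)) ^ n * ((N^2/(n:ℝ)) ^ ((n:ℝ)/2)) ^ (min β 1) * Q)
          ^ (1/(n:ℝ)) :=
        Real.rpow_le_rpow hL0 prod_le1 (by positivity)
  _ = ((γ⁻¹ * N ^ (1 - min β 1)) ^ n) ^ (1/(n:ℝ))
        * (((N^2/(n:ℝ)) ^ ((n:ℝ)/2)) ^ (min β 1)) ^ (1/(n:ℝ)) * Q ^ (1/(n:ℝ)) := by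
        rw [Real.mul_rpow (mul_nonneg (pow_nonneg base0 n) (Real.rpow_nonneg
          (Real.rpow_nonneg hb0 _) _)) hQ0,
          Real.mul_rpow (pow_nonneg base0 n) (Real.rpow_nonneg (Real.rpow_nonneg hb0 _) _)]
  _ = γ⁻¹ * (n : ℝ) ^ (-(min β 1) / 2) * N * Q ^ (1/(n:ℝ)) := by
        rw [hE, hD]
        exact hcomb
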